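/- Let G be bipartite with parts V_B and V_S, and let α⁰ ∈ [0,W]^{2|E|} be an initial message vector such that α⁰ ⪰ α¹, where α¹ is obtained from α⁰ by one step of the natural dynamics. Then the trajectory α^t of the natural dynamics converges as t → ∞ to some fixed point α* of the natural dynamics. -/

import Mathlib

open Finset Filter Topology

/-- The offer `m_{i→j}` computed from message vector `α`:
`m_{i→j} = (w_{ij} − α_{i→j})₊ − (1/2)(w_{ij} − α_{i→j} − α_{j→i})₊`. -/
noncomputable def offer {V : Type*} (w α : V → V → ℝ) (i j : V) : ℝ :=
  max (w i j - α i j) 0 - (1 / 2) * max (w i j - α i j - α j i) 0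

/-- `max_{k ∈ ∂i ∖ {j}} m_{k→i}` (max over the empty set is 0). -/
noncomputable def bestAlt {V : Type*} [Fintype V] [DecidableEq V]
    (Adj : V → V → Prop) [DecidableRel Adj] (w α : V → V → ℝ) (i j : V) : ℝ :=
  (Finset.univ.filter fun k => Adj i k ∧ k ≠ j).fold max 0 fun k => offer w α k i

/-- Earnings `γ_i = max_{k ∈ ∂i} m_{k→i}` (max over the empty set is 0). -/
noncomputable def earn {V : Type*} [Fintype V]
    (Adj : V → V → Prop) [DecidableRel Adj] (w α : V → V → ℝ) (i : V) : ℝ :=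
  (Finset.univ.filter fun k => Adj i k).fold max 0 fun k => offer w α k i

/-- One step of the natural dynamics with damping factor `κ`:
`α'_{i→j} = κ · max_{k∈∂i∖{j}} m_{k→i} + (1−κ) · α_{i→j}`. -/
noncomputable def step {V : Type*} [Fintype V] [DecidableEq V]
    (Adj : V → V → Prop) [DecidableRel Adj] (w : V → V → ℝ) (κ : ℝ)
    (α : V → V → ℝ) : V → V → ℝ :=
  fun i j => κ * bestAlt Adj w α i j + (1 - κ) * α i j

/-- A fixed point of the natural dynamics: the message vector is unchanged by the update. -/
def IsFixedPoint {V : Type*} [Fintype V] [DecidableEq V]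
    (Adj : V → V → Prop) [DecidableRel Adj] (w : V → V → ℝ) (κ : ℝ)
    (α : V → V → ℝ) : Prop :=
  ∀ i j, Adj i j → step Adj w κ α i j = α i j

/-- `W`, the maximum edge weight. -/
noncomputable def maxW {V : Type*} [Fintype V]
    (Adj : V → V → Prop) [DecidableRel Adj] (w : V → V → ℝ) : ℝ :=
  ((Finset.univ ×ˢ Finset.univ).filter fun p : V × V => Adj p.1 p.2).fold max 0
    fun p => w p.1 p.2

/-- A valid message vector: `α ∈ [0, W]^{2|E|}`. -/
def ValidMsg {V : Type*} [Fintype V]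
    (Adj : V → V → Prop) [DecidableRel Adj] (w : V → V → ℝ) (α : V → V → ℝ) : Prop :=
  ∀ i j, Adj i j → α i j ∈ Set.Icc (0 : ℝ) (maxW Adj w)

/-- `G = (V, E)` is a finite simple graph with symmetric positive edge weights. -/
def GoodGraph {V : Type*} (Adj : V → V → Prop) (w : V → V → ℝ) : Prop :=
  (∀ i j, Adj i j → Adj j i) ∧ (∀ i, ¬Adj i i) ∧ (∀ i j, w i j = w j i) ∧
  (∀ i j, Adj i j → 0 < w i j)

/-- `G` is bipartite with buyers `isB` and sellers the complement: every edge joins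
a buyer and a seller. -/
def Bipartite {V : Type*} (Adj : V → V → Prop) (isB : V → Prop) : Prop :=
  ∀ i j, Adj i j → (isB i ↔ ¬isB j)

/-- The bipartite partial ordering `α ⪰ β`: for every edge `(i, j')` with `i` a buyer
and `j'` a seller, `α_{i→j'} ≥ β_{i→j'}` and `α_{j'→i} ≤ β_{j'→i}`. -/
def DomGE {V : Type*} (Adj : V → V → Prop) (isB : V → Prop) (α β : V → V → ℝ) : Prop :=
  ∀ i j, Adj i j → isB i → ¬isB j → β i j ≤ α i j ∧ α j i ≤ β j i

/- ---------- auxiliary lemmas ---------- -/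

lemma offer_mono_aux (w a a' b b' : ℝ) (ha : a' ≤ a) (hb : b ≤ b') (hb0 : 0 ≤ b) :
    max (w - a) 0 - 1/2 * max (w - a - b) 0 ≤ max (w - a') 0 - 1/2 * max (w - a' - b') 0 := by
  rcases max_cases (w - a) 0 with ⟨h1, h1'⟩ | ⟨h1, h1'⟩ <;>
  rcases max_cases (w - a') 0 with ⟨h2, h2'⟩ | ⟨h2, h2'⟩ <;>
  rcases max_cases (w - a - b) 0 with ⟨h3, h3'⟩ | ⟨h3, h3'⟩ <;>
  rcases max_cases (w - a' - b') 0 with ⟨h4, h4'⟩ | ⟨h4, h4'⟩ <;>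
  linarith

lemma tendsto_fold_max' {ι : Type*} (s : Finset ι) (f : ℕ → ι → ℝ) (g : ι → ℝ)
    (h : ∀ k ∈ s, Tendsto (fun t => f t k) atTop (nhds (g k))) :
    Tendsto (fun t => s.fold max 0 (f t)) atTop (nhds (s.fold max 0 g)) := by
  classical
  induction s using Finset.induction with
  | empty => simp only [Finset.fold_empty]; exact tendsto_const_nhds
  | insert _ _ hx ih =>
    rename_i a s'
    simp only [Finset.fold_insert hx]
    exact ((h a (Finset.mem_insert_self a s')).max
      (ih fun k hk => h k (Finset.mem_insert_of_mem hk)))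

lemma fold_max_mono {ι : Type*} (s : Finset ι) (f g : ι → ℝ)
    (h : ∀ k ∈ s, f k ≤ g k) : s.fold max 0 f ≤ s.fold max 0 g := by
  rw [Finset.fold_max_le]
  refine ⟨?_, fun x hx => ?_⟩
  · rw [Finset.le_fold_max]; exact Or.inl le_rfl
  · refine le_trans (h x hx) ?_
    rw [Finset.le_fold_max]; exact Or.inr ⟨x, hx, le_rfl⟩

lemma zero_le_fold_max {ι : Type*} (s : Finset ι) (f : ι → ℝ) : 0 ≤ s.fold max 0 f := by
  rw [Finset.le_fold_max]; exact Or.inl le_rfl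

lemma fold_max_le_of {ι : Type*} (s : Finset ι) (f : ι → ℝ) (c : ℝ) (hc : 0 ≤ c)
    (h : ∀ k ∈ s, f k ≤ c) : s.fold max 0 f ≤ c := (Finset.fold_max_le (c := c)).mpr ⟨hc, h⟩

lemma le_fold_max_of {ι : Type*} (s : Finset ι) (f : ι → ℝ) {x : ι} (hx : x ∈ s) :
    f x ≤ s.fold max 0 f := by rw [Finset.le_fold_max]; exact Or.inr ⟨x, hx, le_rfl⟩

lemma valid_step {V : Type*} [Fintype V] [DecidableEq V]
    (Adj : V → V → Prop) [DecidableRel Adj] (w : V → V → ℝ)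
    (hG : GoodGraph Adj w) {κ : ℝ} (hκ0 : 0 ≤ κ) (hκ1 : κ ≤ 1)
    {α : V → V → ℝ} (hα : ValidMsg Adj w α) : ValidMsg Adj w (step Adj w κ α) := by
  have hW0 : 0 ≤ maxW Adj w := zero_le_fold_max _ _
  intro i j hij
  have hB0 : 0 ≤ bestAlt Adj w α i j := zero_le_fold_max _ _
  have hBW : bestAlt Adj w α i j ≤ maxW Adj w := by
    apply fold_max_le_of _ _ _ hW0
    intro k hk
    simp only [Finset.mem_filter, Finset.mem_univ, true_and] at hk
    have hik : Adj i k := hk.1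
    have hki : Adj k i := hG.1 i k hik
    have ha := hα k i hki
    have hwki : w k i ≤ maxW Adj w := by
      have := le_fold_max_of ((Finset.univ ×ˢ Finset.univ).filter fun p : V × V => Adj p.1 p.2)
        (fun p => w p.1 p.2)
        (x := (k, i)) (Finset.mem_filter.mpr ⟨Finset.mem_product.mpr ⟨Finset.mem_univ _, Finset.mem_univ _⟩, hki⟩)
      exact this
    simp only [offer]
    have h2 : 0 ≤ max (w k i - α k i - α i k) 0 := le_max_right _ _
    have h3 : max (w k i - α k i) 0 ≤ maxW Adj w := max_le (by linarith [ha.1]) hW0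
    linarith
  obtain ⟨ha0, haW⟩ := hα i j hij
  simp only [step, Set.mem_Icc]
  constructor
  · have := mul_nonneg hκ0 hB0
    have := mul_nonneg (show (0:ℝ) ≤ 1 - κ by linarith) ha0
    linarith
  · have := mul_le_mul_of_nonneg_left hBW hκ0
    have := mul_le_mul_of_nonneg_left haW (show (0:ℝ) ≤ 1 - κ by linarith)
    linarith

lemma step_mono {V : Type*} [Fintype V] [DecidableEq V]
    (Adj : V → V → Prop) [DecidableRel Adj] (w : V → V → ℝ)
    (hG : GoodGraph Adj w) (isB : V → Prop) (hbip : Bipartite Adj isB)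
    {κ : ℝ} (hκ0 : 0 ≤ κ) (hκ1 : κ ≤ 1)
    {α β : V → V → ℝ} (hα0 : ∀ i j, Adj i j → 0 ≤ α i j)
    (hβ0 : ∀ i j, Adj i j → 0 ≤ β i j)
    (hdom : DomGE Adj isB α β) : DomGE Adj isB (step Adj w κ α) (step Adj w κ β) := by
  intro i j hij hBi hBj
  have hb_le : bestAlt Adj w β i j ≤ bestAlt Adj w α i j := by
    apply fold_max_mono
    intro k hk
    simp only [Finset.mem_filter, Finset.mem_univ, true_and] at hk
    have hik : Adj i k := hk.1
    have hki : Adj k i := hG.1 i k hik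
    have hBk : ¬ isB k := (hbip i k hik).mp hBi
    have hd := hdom i k hik hBi hBk
    simp only [offer]
    exact offer_mono_aux (w k i) (β k i) (α k i) (β i k) (α i k) hd.2 hd.1 (hβ0 i k hik)
  have hb_le' : bestAlt Adj w α j i ≤ bestAlt Adj w β j i := by
    apply fold_max_mono
    intro k hk
    simp only [Finset.mem_filter, Finset.mem_univ, true_and] at hk
    have hjk : Adj j k := hk.1
    have hkj : Adj k j := hG.1 j k hjk
    have hBk : isB k := by
      by_contra hn
      exact hBj ((hbip j k hjk).mpr hn)
    have hd := hdom k j hkj hBk hBj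
    simp only [offer]
    exact offer_mono_aux (w k j) (α k j) (β k j) (α j k) (β j k) hd.1 hd.2 (hα0 j k hjk)
  have h1 := hdom i j hij hBi hBj
  have hκ' : (0:ℝ) ≤ 1 - κ := by linarith
  constructor <;> simp only [step]
  · have := mul_le_mul_of_nonneg_left hb_le hκ0
    have := mul_le_mul_of_nonneg_left h1.1 hκ'
    linarith
  · have := mul_le_mul_of_nonneg_left hb_le' hκ0
    have := mul_le_mul_of_nonneg_left h1.2 hκ'
    linarith

/- ---------- main theorem ---------- -/

/-- On a bipartite graph, if the initial condition `α⁰ ∈ [0,W]^{2|E|}` satisfies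
`α⁰ ⪰ α¹`, then the natural dynamics converges to some fixed point. -/
theorem stmt5 {V : Type*} [Fintype V] [DecidableEq V]
    (Adj : V → V → Prop) [DecidableRel Adj] (w : V → V → ℝ)
    (hG : GoodGraph Adj w) (isB : V → Prop) (hbip : Bipartite Adj isB)
    (κ : ℝ) (hκ : κ ∈ Set.Ioo (0 : ℝ) 1)
    (α0 : V → V → ℝ) (hvalid : ValidMsg Adj w α0)
    (h : DomGE Adj isB α0 (step Adj w κ α0)) :
    ∃ αstar : V → V → ℝ, IsFixedPoint Adj w κ αstar ∧
      ∀ i j, Adj i j →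
        Filter.Tendsto (fun t : ℕ => (step Adj w κ)^[t] α0 i j)
          Filter.atTop (nhds (αstar i j)) := by
  classical
  obtain ⟨hκ0, hκ1⟩ := hκ
  have hκ0' : (0:ℝ) ≤ κ := le_of_lt hκ0
  have hκ1' : κ ≤ 1 := le_of_lt hκ1
  -- validity along the trajectory
  have hvalid_t : ∀ t, ValidMsg Adj w ((step Adj w κ)^[t] α0) := by
    intro t
    induction t with
    | zero => simpa using hvalid
    | succ n ih =>
      rw [Function.iterate_succ_apply']
      exact valid_step Adj w hG hκ0' hκ1' ih
  -- domination chain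
  have hdom_t : ∀ t, DomGE Adj isB ((step Adj w κ)^[t] α0) ((step Adj w κ)^[t+1] α0) := by
    intro t
    induction t with
    | zero => simpa using h
    | succ n ih =>
      have := step_mono Adj w hG isB hbip hκ0' hκ1'
        (fun i j hij => (hvalid_t n i j hij).1)
        (fun i j hij => (hvalid_t (n+1) i j hij).1) ih
      simpa only [Function.iterate_succ_apply'] using this
  -- existence of limits
  have hex : ∀ i j, ∃ l : ℝ, Adj i j →
      Tendsto (fun t : ℕ => (step Adj w κ)^[t] α0 i j) atTop (nhds l) := by
    intro i j
    by_cases hij : Adj i j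
    · by_cases hBi : isB i
      · have hBj : ¬ isB j := (hbip i j hij).mp hBi
        have hanti : Antitone (fun t : ℕ => (step Adj w κ)^[t] α0 i j) :=
          antitone_nat_of_succ_le (fun t => ((hdom_t t) i j hij hBi hBj).1)
        refine ⟨_, fun _ => tendsto_atTop_ciInf hanti ⟨0, ?_⟩⟩
        rintro x ⟨t, rfl⟩
        exact (hvalid_t t i j hij).1
      · have hBj : isB j := by
          by_contra hn
          exact hBi ((hbip i j hij).mpr hn)
        have hji : Adj j i := hG.1 i j hij
        have hmono : Monotone (fun t : ℕ => (step Adj w κ)^[t] α0 i j) :=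
          monotone_nat_of_le_succ (fun t => ((hdom_t t) j i hji hBj hBi).2)
        refine ⟨_, fun _ => tendsto_atTop_ciSup hmono ⟨maxW Adj w, ?_⟩⟩
        rintro x ⟨t, rfl⟩
        exact (hvalid_t t i j hij).2
    · exact ⟨0, fun hc => absurd hc hij⟩
  choose αstar hαstar using hex
  refine ⟨αstar, ?_, fun i j hij => hαstar i j hij⟩
  intro i j hij
  -- limit of shifted sequence
  have h1 : Tendsto (fun t : ℕ => (step Adj w κ)^[t+1] α0 i j) atTop (nhds (αstar i j)) :=
    (hαstar i j hij).comp (tendsto_add_atTop_nat 1)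
  have h1' : Tendsto (fun t : ℕ => κ * bestAlt Adj w ((step Adj w κ)^[t] α0) i j
      + (1 - κ) * (step Adj w κ)^[t] α0 i j) atTop (nhds (αstar i j)) := by
    simpa only [Function.iterate_succ_apply', step] using h1
  -- limit of the bestAlt term
  have h2 : Tendsto (fun t : ℕ => bestAlt Adj w ((step Adj w κ)^[t] α0) i j) atTop
      (nhds (bestAlt Adj w αstar i j)) := by
    simp only [bestAlt]
    apply tendsto_fold_max'
    intro k hk
    simp only [Finset.mem_filter, Finset.mem_univ, true_and] at hk
    have hik : Adj i k := hk.1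
    have hki : Adj k i := hG.1 i k hik
    have hA := hαstar k i hki
    have hB := hαstar i k hik
    simp only [offer]
    exact ((tendsto_const_nhds.sub hA).max tendsto_const_nhds).sub
      ((((tendsto_const_nhds.sub hA).sub hB).max tendsto_const_nhds).const_mul (1/2))
  have h3 : Tendsto (fun t : ℕ => κ * bestAlt Adj w ((step Adj w κ)^[t] α0) i j
      + (1 - κ) * (step Adj w κ)^[t] α0 i j) atTop
      (nhds (κ * bestAlt Adj w αstar i j + (1 - κ) * αstar i j)) :=
    (h2.const_mul κ).add ((hαstar i j hij).const_mul (1 - κ))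
  have h4 := tendsto_nhds_unique h3 h1'
  simpa only [step] using h4
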